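/- For all t ≥ 0 and all z ∈ 𝔻, with φ_t(z) = e^{-t}z + 1 - e^{-t}, one has Re( (φ_t(z)+1)/(φ_t(z)-1) - (z+1)/(z-1) ) ≤ 0. -/

import Mathlib

open Complex Metric

noncomputable def phiFlow (t : ℝ) (z : ℂ) : ℂ :=
  (Real.exp (-t) : ℂ) * z + 1 - (Real.exp (-t) : ℂ)

/-- For all `t ≥ 0` and all `z ∈ 𝔻`,
`Re( (φ_t(z)+1)/(φ_t(z)-1) - (z+1)/(z-1) ) ≤ 0`. -/
theorem re_phiFlow_diff_nonpos (t : ℝ) (ht : 0 ≤ t) (z : ℂ) (hz : z ∈ ball (0 : ℂ) 1) :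
    ((phiFlow t z + 1) / (phiFlow t z - 1) - (z + 1) / (z - 1)).re ≤ 0 := by
  have hzabs : ‖z‖ < 1 := by
    simpa [Complex.dist_eq] using mem_ball.mp hz
  have hre : z.re < 1 := lt_of_le_of_lt (Complex.re_le_norm z) hzabs
  have hz1 : z - 1 ≠ 0 := by
    intro h
    have : z = 1 := by linear_combination h
    simp [this] at hre
  have ha : (0:ℝ) < Real.exp (-t) := Real.exp_pos _
  have ha1 : Real.exp (-t) ≤ 1 := Real.exp_le_one_iff.mpr (by linarith)
  have haC : (Real.exp (-t) : ℂ) ≠ 0 := by exact_mod_cast ha.ne'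
  have hphi : phiFlow t z - 1 = (Real.exp (-t) : ℂ) * (z - 1) := by
    unfold phiFlow; ring
  have hphi0 : phiFlow t z - 1 ≠ 0 := by
    rw [hphi]; exact mul_ne_zero haC hz1
  have key : (phiFlow t z + 1) / (phiFlow t z - 1) - (z + 1) / (z - 1)
      = ((1 / Real.exp (-t) - 1 : ℝ) : ℂ) * (2 / (z - 1)) := by
    rw [div_sub_div _ _ hphi0 hz1, hphi]
    unfold phiFlow
    push_cast
    field_simp
    ring
  rw [key, Complex.re_ofReal_mul]
  apply mul_nonpos_of_nonneg_of_nonpos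
  · have : (1:ℝ) ≤ 1 / Real.exp (-t) := by rw [le_div_iff₀ ha]; linarith
    linarith
  · rw [div_eq_mul_inv, Complex.mul_re, Complex.inv_re, Complex.inv_im]
    have h1 : (z - 1).re < 0 := by simp [Complex.sub_re]; linarith
    have h2 : 0 ≤ Complex.normSq (z - 1) := Complex.normSq_nonneg _
    have := div_nonpos_of_nonpos_of_nonneg h1.le h2
    have h3 : (2:ℂ).re = 2 := by norm_num
    have h4 : (2:ℂ).im = 0 := by norm_num
    rw [h3, h4]
    nlinarith
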